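/- A monad T on Type u is α-commutative for every injective function α : Fin m → Fin n (for all m, n) if and only if T is both commutative and affine. -/

import Mathlib

universe u

/-- The canonical "double strength" `ψ` of a monad: first `p`, then `q`. -/
def monadPsi {T : Type u → Type u} [Monad T] {X Y : Type u} (p : T X) (q : T Y) :
    T (X × Y) := do
  let x ← p
  let y ← q
  pure (x, y)

/-- The reversed double strength `ψ'` of a monad: first `q`, then `p`. -/
def monadPsi' {T : Type u → Type u} [Monad T] {X Y : Type u} (p : T X) (q : T Y) :
    T (X × Y) := do
  let y ← q
  let x ← p
  pure (x, y)

/-- The `n`-ary sequencing map `ψ⁽ⁿ⁾ : (Fin n → T X) → T (Fin n → X)`. -/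
def monadPsiN {T : Type u → Type u} [Monad T] {X : Type u} :
    (n : ℕ) → (Fin n → T X) → T (Fin n → X)
  | 0, _ => pure Fin.elim0
  | n + 1, p => do
    let x ← p 0
    let v ← monadPsiN n (p ∘ Fin.succ)
    pure (Fin.cons x v)

/-- `T` is `α`-commutative for a function `α : Fin m → Fin n`. -/
def AlphaCommutative (T : Type u → Type u) [Monad T] {m n : ℕ} (α : Fin m → Fin n) : Prop :=
  ∀ (X : Type u) (p : Fin n → T X),
    (fun v => v ∘ α) <$> monadPsiN n p = monadPsiN m (p ∘ α)

/-- `T` is commutative. -/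
def MonadIsCommutative (T : Type u → Type u) [Monad T] : Prop :=
  ∀ (X Y : Type u) (p : T X) (q : T Y), monadPsi p q = monadPsi' p q

/-- `T` is affine. -/
def MonadIsAffine (T : Type u → Type u) [Monad T] : Prop :=
  ∀ (X : Type u) (p : T X),
    (fun _ => PUnit.unit.{u + 1}) <$> p = (pure PUnit.unit.{u + 1} : T PUnit.{u + 1})

/-- `T` is relevant. -/
def MonadIsRelevant (T : Type u → Type u) [Monad T] : Prop :=
  ∀ (X : Type u) (p : T X), monadPsi p p = (fun x : X => (x, x)) <$> p

section AuxLemmas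
variable {T : Type u → Type u} [Monad T] [LawfulMonad T]

private lemma map_const_of_affine (hA : MonadIsAffine T) {X Y : Type u} (c : Y) (p : T X) :
    (fun _ => c) <$> p = (pure c : T Y) := by
  have h := hA X p
  calc (fun _ => c) <$> p
      = ((fun _ : PUnit.{u+1} => c) ∘ (fun _ => PUnit.unit.{u+1})) <$> p := rfl
    _ = (fun _ : PUnit.{u+1} => c) <$> ((fun _ => PUnit.unit.{u+1}) <$> p) := by
        rw [comp_map]
    _ = pure c := by rw [h, map_pure]

private lemma bind_const_of_affine (hA : MonadIsAffine T) {X Y : Type u} (p : T X) (r : T Y) :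
    (p >>= fun _ => r) = r := by
  have : (p >>= fun _ => r)
      = ((fun _ => PUnit.unit.{u+1}) <$> p) >>= fun _ => r := by
    rw [bind_map_left]
  rw [this, hA, pure_bind]

private lemma swap_bind (hC : MonadIsCommutative T) {X Y Z : Type u}
    (p : T X) (q : T Y) (k : X → Y → T Z) :
    (p >>= fun x => q >>= fun y => k x y) = q >>= fun y => p >>= fun x => k x y := by
  have h := congrArg (fun t => t >>= fun z : X × Y => k z.1 z.2) (hC X Y p q)
  simpa [monadPsi, monadPsi', bind_assoc] using h

private lemma cons_insertNth {X : Type u} {n : ℕ} (j : Fin (n+1)) (x0 x : X) (w : Fin n → X) :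
    @Fin.insertNth _ (fun _ => X) j.succ x (Fin.cons x0 w)
      = Fin.cons x0 (@Fin.insertNth _ (fun _ => X) j x w) := by
  funext t
  refine Fin.cases ?_ ?_ t
  · have h0 : (0 : Fin (n+2)) = j.succ.succAbove 0 := (Fin.succ_succAbove_zero j).symm
    rw [h0, Fin.insertNth_apply_succAbove]
    simp
  · intro k
    refine Fin.succAboveCases j ?_ ?_ k
    · rw [Fin.insertNth_apply_same]
      simp
    · intro k'
      rw [← Fin.succ_succAbove_succ, Fin.insertNth_apply_succAbove]
      simp

private lemma psiN_eq_insert (hC : MonadIsCommutative T) {X : Type u} :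
    ∀ (n : ℕ) (i : Fin (n+1)) (p : Fin (n+1) → T X),
      monadPsiN (n+1) p =
        p i >>= fun x => monadPsiN n (p ∘ i.succAbove) >>= fun v =>
          pure (@Fin.insertNth _ (fun _ => X) i x v) := by
  intro n
  induction n with
  | zero =>
    intro i p
    have hi : i = 0 := Subsingleton.elim (α := Fin 1) i 0
    subst hi
    show (p 0 >>= fun x => (pure Fin.elim0 : T (Fin 0 → X)) >>= fun v =>
        pure (Fin.cons x v : Fin _ → _))
      = p 0 >>= fun x => (pure Fin.elim0 : T (Fin 0 → X)) >>= fun v =>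
        pure (@Fin.insertNth _ (fun _ => X) 0 x v)
    simp only [pure_bind]
    exact bind_congr fun x => congrArg pure (Fin.insertNth_zero' x Fin.elim0).symm
  | succ n ih =>
    intro i p
    refine Fin.cases ?_ ?_ i
    · show monadPsiN (n+2) p
        = p 0 >>= fun x => monadPsiN (n+1) (p ∘ Fin.succ) >>= fun v =>
            pure (@Fin.insertNth _ (fun _ => X) 0 x v)
      refine bind_congr fun x => bind_congr fun v => ?_
      exact congrArg pure (Fin.insertNth_zero' x v).symm
    · intro j
      calc monadPsiN (n+2) p
          = p 0 >>= fun x0 => monadPsiN (n+1) (p ∘ Fin.succ) >>= fun v =>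
              pure (Fin.cons x0 v : Fin _ → _) := rfl
        _ = p 0 >>= fun x0 =>
              (p j.succ >>= fun x =>
                monadPsiN n ((p ∘ Fin.succ) ∘ j.succAbove) >>= fun w =>
                  pure (@Fin.insertNth _ (fun _ => X) j x w)) >>= fun v =>
                    pure (Fin.cons x0 v : Fin _ → _) :=
            bind_congr fun x0 => by rw [ih j (p ∘ Fin.succ)]; rfl
        _ = p 0 >>= fun x0 => p j.succ >>= fun x =>
              monadPsiN n ((p ∘ Fin.succ) ∘ j.succAbove) >>= fun w =>
                pure (Fin.cons x0 (@Fin.insertNth _ (fun _ => X) j x w) : Fin _ → _) := by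
            simp only [bind_assoc, pure_bind]
        _ = p j.succ >>= fun x => p 0 >>= fun x0 =>
              monadPsiN n ((p ∘ Fin.succ) ∘ j.succAbove) >>= fun w =>
                pure (Fin.cons x0 (@Fin.insertNth _ (fun _ => X) j x w) : Fin _ → _) :=
            swap_bind hC _ _ _
        _ = p j.succ >>= fun x => p 0 >>= fun x0 =>
              monadPsiN n ((p ∘ Fin.succ) ∘ j.succAbove) >>= fun w =>
                pure (@Fin.insertNth _ (fun _ => X) j.succ x (Fin.cons x0 w)) := by
            refine bind_congr fun x => bind_congr fun x0 => bind_congr fun w => ?_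
            rw [cons_insertNth]
        _ = p j.succ >>= fun x =>
              monadPsiN (n+1) (p ∘ (j.succ).succAbove) >>= fun v =>
                pure (@Fin.insertNth _ (fun _ => X) j.succ x v) := by
            have hfun : ((p ∘ (j.succ).succAbove) ∘ Fin.succ)
                = ((p ∘ Fin.succ) ∘ j.succAbove) := by
              funext k
              simp [Function.comp]
            have hexp : monadPsiN (n+1) (p ∘ (j.succ).succAbove)
                = p 0 >>= fun x0 =>
                    monadPsiN n ((p ∘ Fin.succ) ∘ j.succAbove) >>= fun w =>
                      pure (Fin.cons x0 w : Fin _ → _) := by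
              show (p ((j.succ).succAbove 0) >>= fun x0 =>
                  monadPsiN n ((p ∘ (j.succ).succAbove) ∘ Fin.succ) >>= fun w =>
                    pure (Fin.cons x0 w : Fin _ → _)) = _
              rw [hfun, Fin.succ_succAbove_zero]
            rw [hexp]
            simp only [bind_assoc, pure_bind]

private lemma alphaComm_of_comm_affine (hC : MonadIsCommutative T) (hA : MonadIsAffine T) :
    ∀ (m n : ℕ) (α : Fin m → Fin n), Function.Injective α → AlphaCommutative T α := by
  intro m
  induction m with
  | zero =>
    intro n α _ X p
    have hconst : (fun v : Fin n → X => v ∘ α) = fun _ => (Fin.elim0 : Fin 0 → X) := by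
      funext v
      funext k
      exact k.elim0
    rw [hconst, map_const_of_affine hA]
    rfl
  | succ m ih =>
    intro n α hα X p
    cases n with
    | zero => exact (α 0).elim0
    | succ l =>
      have hne : ∀ j : Fin m, α j.succ ≠ α 0 := by
        intro j h
        exact Fin.succ_ne_zero j (hα h)
      choose β hβ using fun j : Fin m => Fin.exists_succAbove_eq (hne j)
      have hβinj : Function.Injective β := by
        intro a b h
        have h2 : α a.succ = α b.succ := by rw [← hβ a, ← hβ b, h]
        exact Fin.succ_injective _ (hα h2)
      have key := psiN_eq_insert hC l (α 0) p
      calc (fun v : Fin (l+1) → X => v ∘ α) <$> monadPsiN (l+1) p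
          = (fun v : Fin (l+1) → X => v ∘ α) <$>
              (p (α 0) >>= fun x => monadPsiN l (p ∘ (α 0).succAbove) >>= fun v =>
                pure (@Fin.insertNth _ (fun _ => X) (α 0) x v)) := by rw [key]
        _ = p (α 0) >>= fun x => monadPsiN l (p ∘ (α 0).succAbove) >>= fun v =>
              pure ((@Fin.insertNth _ (fun _ => X) (α 0) x v) ∘ α) := by
            simp [map_bind, map_pure]
        _ = p (α 0) >>= fun x => monadPsiN l (p ∘ (α 0).succAbove) >>= fun v =>
              pure (Fin.cons x (v ∘ β)) := by
            congr 1
            funext x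
            congr 1
            funext v
            congr 1
            funext t
            refine Fin.cases ?_ ?_ t
            · show (@Fin.insertNth _ (fun _ => X) (α 0) x v) (α 0) = x
              exact Fin.insertNth_apply_same _ _ _
            · intro k
              show (@Fin.insertNth _ (fun _ => X) (α 0) x v) (α k.succ) = v (β k)
              rw [← hβ k]
              exact Fin.insertNth_apply_succAbove _ _ _ _
        _ = p (α 0) >>= fun x =>
              ((fun v : Fin l → X => v ∘ β) <$> monadPsiN l (p ∘ (α 0).succAbove)) >>= fun w =>
                pure (Fin.cons x w) := by
            simp [bind_map_left]
        _ = p (α 0) >>= fun x =>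
              monadPsiN m ((p ∘ (α 0).succAbove) ∘ β) >>= fun w =>
                pure (Fin.cons x w) := by
            have := ih l β hβinj X (p ∘ (α 0).succAbove)
            rw [this]
        _ = monadPsiN (m+1) (p ∘ α) := by
            have hc : ((p ∘ (α 0).succAbove) ∘ β) = (p ∘ α) ∘ Fin.succ := by
              funext j
              simp [Function.comp, hβ j]
            rw [hc]
            rfl

end AuxLemmas

/-- A monad `T` is `α`-commutative for every injective
`α : Fin m → Fin n` iff `T` is commutative and affine. -/
theorem alphaCommutative_injective_iff_commutative_and_affine
    {T : Type u → Type u} [Monad T] [LawfulMonad T] :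
    (∀ (m n : ℕ) (α : Fin m → Fin n), Function.Injective α → AlphaCommutative T α) ↔
      MonadIsCommutative T ∧ MonadIsAffine T := by
  constructor
  · intro h
    have hA : MonadIsAffine T := by
      intro X q
      have h01 := h 0 1 (fun k => k.elim0) (fun a => a.elim0) X (fun _ => q)
      have hsimp : (fun v : Fin 1 → X => v ∘ (fun k : Fin 0 => k.elim0)) <$>
            monadPsiN 1 (fun _ => q)
          = (fun _ => (Fin.elim0 : Fin 0 → X)) <$> q := by
        have e1 : monadPsiN 1 (fun _ : Fin 1 => q)
            = q >>= fun x => pure (Fin.cons x Fin.elim0) := by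
          show (q >>= fun x => monadPsiN 0 ((fun _ : Fin 1 => q) ∘ Fin.succ) >>= fun v =>
            pure (Fin.cons x v : Fin _ → _)) = _
          simp [monadPsiN]
        rw [e1]
        simp only [map_bind, map_pure]
        rw [← bind_pure_comp]
        congr 1
        funext x
        congr 1
        funext k
        exact k.elim0
      rw [hsimp] at h01
      have h01' : (fun _ => (Fin.elim0 : Fin 0 → X)) <$> q
          = pure (Fin.elim0 : Fin 0 → X) := by
        rw [h01]; rfl
      calc (fun _ => PUnit.unit.{u+1}) <$> q
          = ((fun _ : Fin 0 → X => PUnit.unit.{u+1}) ∘ (fun _ => (Fin.elim0 : Fin 0 → X)))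
              <$> q := rfl
        _ = (fun _ : Fin 0 → X => PUnit.unit.{u+1}) <$>
              ((fun _ => (Fin.elim0 : Fin 0 → X)) <$> q) := by rw [comp_map]
        _ = pure PUnit.unit := by rw [h01', map_pure]
    have hsame : ∀ (Z : Type u) (a b : T Z),
        (a >>= fun x => b >>= fun y => pure (x, y))
          = (b >>= fun y => a >>= fun x => pure (x, y)) := by
      intro Z a b
      have hswap := h 2 2 ![1, 0] (by decide) Z ![a, b]
      have e2 : monadPsiN 2 ![a, b]
          = a >>= fun x => b >>= fun y =>
              pure (Fin.cons x (Fin.cons y Fin.elim0)) := by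
        show (![a,b] 0 >>= fun x => monadPsiN 1 (![a,b] ∘ Fin.succ) >>= fun v =>
          pure (Fin.cons x v : Fin _ → _)) = _
        have e1 : monadPsiN 1 (![a,b] ∘ Fin.succ)
            = b >>= fun y => pure (Fin.cons y Fin.elim0) := by
          show ((![a,b] ∘ Fin.succ) 0 >>= fun y =>
            monadPsiN 0 ((![a,b] ∘ Fin.succ) ∘ Fin.succ) >>= fun v =>
              pure (Fin.cons y v : Fin _ → _)) = _
          simp [monadPsiN]
        rw [e1]
        simp [bind_assoc]
      have e3 : monadPsiN 2 (![a, b] ∘ ![1, 0])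
          = b >>= fun y => a >>= fun x =>
              pure (Fin.cons y (Fin.cons x Fin.elim0)) := by
        have hcomp : (![a, b] ∘ ![1, 0]) = ![b, a] := by
          funext k
          fin_cases k <;> rfl
        rw [hcomp]
        show (![b,a] 0 >>= fun y => monadPsiN 1 (![b,a] ∘ Fin.succ) >>= fun v =>
          pure (Fin.cons y v : Fin _ → _)) = _
        have e1 : monadPsiN 1 (![b,a] ∘ Fin.succ)
            = a >>= fun x => pure (Fin.cons x Fin.elim0) := by
          show ((![b,a] ∘ Fin.succ) 0 >>= fun x =>
            monadPsiN 0 ((![b,a] ∘ Fin.succ) ∘ Fin.succ) >>= fun v =>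
              pure (Fin.cons x v : Fin _ → _)) = _
          simp [monadPsiN]
        rw [e1]
        simp [bind_assoc]
      rw [e2, e3] at hswap
      have hswap2 := congrArg (fun t => (fun v : Fin 2 → Z => (v 1, v 0)) <$> t) hswap
      simp only [map_bind, map_pure] at hswap2
      have hL : ∀ x y : Z,
          ((Fin.cons x (Fin.cons y Fin.elim0) : Fin 2 → Z) ∘ ![1, 0]) = ![y, x] := by
        intro x y
        funext k
        fin_cases k <;> rfl
      simp only [hL] at hswap2
      convert hswap2 using 2 <;> rfl
    have hC : MonadIsCommutative T := by
      intro X Y p q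
      show monadPsi p q = monadPsi' p q
      by_cases hX : Nonempty X
      · by_cases hY : Nonempty Y
        · have hs := hsame (X ⊕ Y) (Sum.inl <$> p) (Sum.inr <$> q)
          simp only [bind_map_left] at hs
          have hs2 := congrArg (fun t =>
            (fun z : (X ⊕ Y) × (X ⊕ Y) =>
              (Sum.elim id (fun _ => Classical.choice hX) z.1,
               Sum.elim (fun _ => Classical.choice hY) id z.2)) <$> t) hs
          simp only [map_bind, map_pure, Sum.elim_inl, Sum.elim_inr, id] at hs2
          simpa [monadPsi, monadPsi'] using hs2
        · have h1 : monadPsi p q = p >>= fun _ => monadPsi' p q := by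
            show (p >>= fun x => q >>= fun y => pure (x, y)) = _
            congr 1
            funext x
            show (q >>= fun y => pure (x, y)) = monadPsi' p q
            show _ = q >>= fun y => p >>= fun x' => pure (x', y)
            congr 1
            funext y
            exact (hY (Nonempty.intro y)).elim
          rw [h1, bind_const_of_affine hA]
      · have h1 : monadPsi' p q = q >>= fun _ => monadPsi p q := by
          show (q >>= fun y => p >>= fun x => pure (x, y)) = _
          congr 1
          funext y
          congr 1
          funext x
          exact (hX (Nonempty.intro x)).elim
        rw [h1, bind_const_of_affine hA]
    exact ⟨hC, hA⟩
  · rintro ⟨hC, hA⟩ m n α hα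
    exact alphaComm_of_comm_affine hC hA m n α hα
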